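/- The Bergman distance on the Siegel upper half-space U is given explicitly by δ_U(z,w) = tanh⁻¹ √(1 - ρ(z)ρ(w)/|ρ(z,w)|²) for all z, w ∈ U. In particular, 0 ≤ ρ(z)ρ(w) ≤ |ρ(z,w)|² for all z, w ∈ U. -/

import Mathlib

open MeasureTheory Real Complex

noncomputable section

/-- `ℂ^n` split as `(z', z_n)` with `z' ∈ ℂ^{n-1}` (here `m = n - 1`). -/
abbrev Cn (m : ℕ) := (Fin m → ℂ) × ℂ

/-- `|z'|² = ∑ |z_j|²` for `z' ∈ ℂ^{n-1}`. -/
def nsq1 {m : ℕ} (z' : Fin m → ℂ) : ℝ := ∑ j, ‖z' j‖ ^ 2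

/-- `⟨z', w'⟩ = ∑_{j<n} z_j conj w_j`. -/
def herm1 {m : ℕ} (z' w' : Fin m → ℂ) : ℂ := ∑ j, z' j * (starRingEnd ℂ) (w' j)

/-- Full Hermitian pairing `⟨z, w⟩` on `ℂ^n`. -/
def hermP {m : ℕ} (ξ η : Cn m) : ℂ := herm1 ξ.1 η.1 + ξ.2 * (starRingEnd ℂ) η.2

/-- `|z|²` on `ℂ^n`. -/
def nsqP {m : ℕ} (ξ : Cn m) : ℝ := nsq1 ξ.1 + ‖ξ.2‖ ^ 2

/-- `ρ(z,w) = (i/2)(conj w_n - z_n) - ⟨z', w'⟩`. -/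
def rhoK {m : ℕ} (z w : Cn m) : ℂ :=
  Complex.I / 2 * ((starRingEnd ℂ) w.2 - z.2) - herm1 z.1 w.1

/-- `ρ(z) = Im z_n - |z'|²`. -/
def rho {m : ℕ} (z : Cn m) : ℝ := z.2.im - nsq1 z.1

/-- The Siegel upper half-space `U ⊂ ℂ^n`. -/
def Siegel (m : ℕ) : Set (Cn m) := {z | nsq1 z.1 < z.2.im}

/-- The open unit ball of `ℂ^n`. -/
def Ball (m : ℕ) : Set (Cn m) := {ξ | nsqP ξ < 1}

/-- The Cayley transform `Φ : B^n → U`. -/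
def cayley {m : ℕ} (ξ : Cn m) : Cn m :=
  ((1 + ξ.2)⁻¹ • ξ.1, Complex.I * ((1 - ξ.2) / (1 + ξ.2)))

/-- The inverse hyperbolic tangent `tanh⁻¹`. -/
def artanh (x : ℝ) : ℝ := Real.log ((1 + x) / (1 - x)) / 2

/-- The inverse Cayley transform `Φ⁻¹ : U → B^n`. -/
def invCayley {m : ℕ} (u : Cn m) : Cn m :=
  ((2 * Complex.I / (Complex.I + u.2)) • u.1, (Complex.I - u.2) / (Complex.I + u.2))

/-- Orthogonal projection onto the span of `η` (with `P_0 = 0`). -/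
def PprojP {m : ℕ} (η ξ : Cn m) : Cn m :=
  if η = 0 then 0 else (hermP ξ η / hermP η η) • η

/-- The Möbius transformation `φ_η` of the unit ball of `ℂ^n`. -/
def moebiusP {m : ℕ} (η ξ : Cn m) : Cn m :=
  (1 - hermP ξ η)⁻¹ •
    (η - PprojP η ξ - ((Real.sqrt (1 - nsqP η) : ℝ) : ℂ) • (ξ - PprojP η ξ))

/-- The Bergman distance on the Siegel upper half-space, defined via the Cayley transform
and the unit-ball formula `δ_U(z,w) = tanh⁻¹ |φ_{Φ⁻¹(z)}(Φ⁻¹(w))|`. -/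
def bergmanDist {m : ℕ} (z w : Cn m) : ℝ :=
  _root_.artanh (Real.sqrt (nsqP (moebiusP (invCayley z) (invCayley w))))

lemma nsq1_nonneg {m} (x : Fin m → ℂ) : 0 ≤ nsq1 x :=
  Finset.sum_nonneg fun _ _ => sq_nonneg _

lemma herm1_conj {m} (x y : Fin m → ℂ) : (starRingEnd ℂ) (herm1 x y) = herm1 y x := by
  simp only [herm1, map_sum, map_mul, Complex.conj_conj]
  exact Finset.sum_congr rfl fun j _ => mul_comm _ _

lemma herm1_smul_left {m} (a : ℂ) (x y : Fin m → ℂ) : herm1 (a • x) y = a * herm1 x y := by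
  simp only [herm1, Pi.smul_apply, smul_eq_mul, Finset.mul_sum, mul_assoc]

lemma herm1_smul_right {m} (a : ℂ) (x y : Fin m → ℂ) :
    herm1 x (a • y) = (starRingEnd ℂ) a * herm1 x y := by
  simp only [herm1, Pi.smul_apply, smul_eq_mul, map_mul, Finset.mul_sum]
  exact Finset.sum_congr rfl fun j _ => by ring

lemma herm1_sub_left {m} (x y u : Fin m → ℂ) : herm1 (x - y) u = herm1 x u - herm1 y u := by
  simp only [herm1, Pi.sub_apply, sub_mul, Finset.sum_sub_distrib]

lemma herm1_sub_right {m} (u x y : Fin m → ℂ) : herm1 u (x - y) = herm1 u x - herm1 u y := by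
  simp only [herm1, Pi.sub_apply, map_sub, mul_sub, Finset.sum_sub_distrib]

lemma herm1_self {m} (x : Fin m → ℂ) : herm1 x x = (nsq1 x : ℂ) := by
  simp only [herm1, nsq1, Complex.mul_conj]
  push_cast
  exact Finset.sum_congr rfl fun j _ => by rw [← Complex.sq_norm]; push_cast; ring

lemma nsq1_smul {m} (a : ℂ) (x : Fin m → ℂ) : nsq1 (a • x) = ‖a‖ ^ 2 * nsq1 x := by
  simp only [nsq1, Pi.smul_apply, smul_eq_mul, norm_mul, map_mul, mul_pow, Finset.mul_sum]

lemma nsqP_nonneg {m} (x : Cn m) : 0 ≤ nsqP x := add_nonneg (nsq1_nonneg _) (sq_nonneg _)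

lemma hermP_conj {m} (x y : Cn m) : (starRingEnd ℂ) (hermP x y) = hermP y x := by
  simp only [hermP, map_add, map_mul, Complex.conj_conj, herm1_conj]
  ring

lemma hermP_smul_left {m} (a : ℂ) (x y : Cn m) : hermP (a • x) y = a * hermP x y := by
  simp only [hermP, Prod.smul_fst, Prod.smul_snd, smul_eq_mul, herm1_smul_left]
  ring

lemma hermP_smul_right {m} (a : ℂ) (x y : Cn m) :
    hermP x (a • y) = (starRingEnd ℂ) a * hermP x y := by
  simp only [hermP, Prod.smul_fst, Prod.smul_snd, smul_eq_mul, herm1_smul_right, map_mul]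
  ring

lemma hermP_sub_left {m} (x y u : Cn m) : hermP (x - y) u = hermP x u - hermP y u := by
  simp only [hermP, Prod.fst_sub, Prod.snd_sub, herm1_sub_left, sub_mul]
  ring

lemma hermP_sub_right {m} (u x y : Cn m) : hermP u (x - y) = hermP u x - hermP u y := by
  simp only [hermP, Prod.fst_sub, Prod.snd_sub, herm1_sub_right, map_sub, mul_sub]
  ring

lemma hermP_self {m} (x : Cn m) : hermP x x = (nsqP x : ℂ) := by
  simp only [hermP, nsqP, herm1_self, Complex.mul_conj]
  push_cast
  rw [← Complex.sq_norm]
  push_cast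
  ring

lemma nsqP_smul {m} (a : ℂ) (x : Cn m) : nsqP (a • x) = ‖a‖ ^ 2 * nsqP x := by
  simp only [nsqP, Prod.smul_fst, Prod.smul_snd, smul_eq_mul, nsq1_smul, norm_mul, map_mul, mul_pow]
  ring

lemma nsqP_eq_zero {m} (x : Cn m) (h : nsqP x = 0) : x = 0 := by
  have h' : nsq1 x.1 + ‖x.2‖ ^ 2 = 0 := h
  have h1 : nsq1 x.1 = 0 ∧ ‖x.2‖ ^ 2 = 0 := by
    constructor <;> nlinarith [nsq1_nonneg x.1, sq_nonneg (‖x.2‖)]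
  have hx2 : x.2 = 0 := by
    have h2 := h1.2; simpa using h2
  have hx1 : x.1 = 0 := by
    funext j
    have : ‖x.1 j‖ ^ 2 = 0 := by
      have hle : ‖x.1 j‖ ^ 2 ≤ nsq1 x.1 :=
        Finset.single_le_sum (f := fun j => ‖x.1 j‖ ^ 2)
          (fun _ _ => sq_nonneg _) (Finset.mem_univ j)
      nlinarith [sq_nonneg (‖x.1 j‖), h1.1]
    simpa using this
  exact Prod.ext hx1 hx2

lemma hermP_zero_right {m} (x : Cn m) : hermP x 0 = 0 := by
  simp [hermP, herm1]

lemma nsqP_zero {m} : nsqP (0 : Cn m) = 0 := by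
  simp [nsqP, nsq1]

lemma nsqP_moebius {m} (η ξ : Cn m) (hη : nsqP η ≤ 1) (hc : (1:ℂ) - hermP ξ η ≠ 0) :
    nsqP (moebiusP η ξ) =
      1 - (1 - nsqP η) * (1 - nsqP ξ) / ‖1 - hermP ξ η‖ ^ 2 := by
  by_cases hne : η = 0
  · subst hne
    have hP : PprojP (0 : Cn m) ξ = 0 := by rw [PprojP, if_pos rfl]
    have h1 : (1 : ℂ) - hermP ξ 0 = 1 := by rw [hermP_zero_right, sub_zero]
    have h2 : Real.sqrt (1 - nsqP (0 : Cn m)) = 1 := by rw [nsqP_zero]; simp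
    rw [moebiusP, hP, h1, h2]
    rw [show ((0:Cn m) - 0 - ((1:ℝ):ℂ) • (ξ - 0)) = ((-1:ℂ)) • ξ by push_cast; module]
    rw [inv_one, one_smul, nsqP_smul, nsqP_zero]
    simp
    try ring
  -- main case
  set c := hermP ξ η with hcdef
  set e := nsqP η with hedef
  set f := nsqP ξ with hfdef
  have he0 : 0 < e := by
    rcases lt_or_eq_of_le (nsqP_nonneg η) with h | h
    · exact h
    · exact absurd (nsqP_eq_zero η h.symm) hne
  have heC : ((e:ℝ):ℂ) ≠ 0 := by exact_mod_cast ne_of_gt he0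
  have hee : hermP η η = ((e:ℝ):ℂ) := hermP_self η
  have hff : hermP ξ ξ = ((f:ℝ):ℂ) := hermP_self ξ
  have hcc : hermP η ξ = (starRingEnd ℂ) c := (hermP_conj ξ η).symm
  set s := Real.sqrt (1 - e) with hsdef
  have hs2 : ((s:ℝ):ℂ) * ((s:ℝ):ℂ) = 1 - ((e:ℝ):ℂ) := by
    rw [← Complex.ofReal_mul, Real.mul_self_sqrt (by linarith : (0:ℝ) ≤ 1 - e)]
    push_cast
    ring
  set P : Cn m := (c / ((e:ℝ):ℂ)) • η with hPdef
  have hPη : PprojP η ξ = P := by rw [PprojP, if_neg hne, hee]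
  set A : Cn m := η - P with hAdef
  set B : Cn m := ξ - P with hBdef
  have hAB : hermP A B = 0 := by
    rw [hAdef, hBdef, hPdef]
    simp only [hermP_sub_left, hermP_sub_right, hermP_smul_left, hermP_smul_right,
      map_div₀, Complex.conj_ofReal, hee, hff, hcc]
    field_simp
    ring
  have hBA : hermP B A = 0 := by
    rw [← hermP_conj A B, hAB, map_zero]
  have hAA : hermP A A = ((e:ℝ):ℂ) - c - (starRingEnd ℂ) c
      + c * (starRingEnd ℂ) c / ((e:ℝ):ℂ) := by
    rw [hAdef, hPdef]
    simp only [hermP_sub_left, hermP_sub_right, hermP_smul_left, hermP_smul_right,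
      map_div₀, Complex.conj_ofReal, hee, hff, hcc]
    field_simp
    ring
  have hBB : hermP B B = ((f:ℝ):ℂ) - c * (starRingEnd ℂ) c / ((e:ℝ):ℂ) := by
    rw [hBdef, hPdef]
    simp only [hermP_sub_left, hermP_sub_right, hermP_smul_left, hermP_smul_right,
      map_div₀, Complex.conj_ofReal, hee, hff, hcc]
    field_simp
    rw [← hcdef]
    ring
  set V : Cn m := A - ((s:ℝ):ℂ) • B with hVdef
  have hVV : hermP V V = (1 - c) * (1 - (starRingEnd ℂ) c)
      - (1 - ((e:ℝ):ℂ)) * (1 - ((f:ℝ):ℂ)) := by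
    rw [hVdef]
    simp only [hermP_sub_left, hermP_sub_right, hermP_smul_left, hermP_smul_right,
      Complex.conj_ofReal, hAB, hBA, hAA, hBB, mul_zero, sub_zero]
    field_simp
    linear_combination (((f:ℝ):ℂ) * ((e:ℝ):ℂ) - c * (starRingEnd ℂ) c) * hs2
  have habs : ‖1 - c‖ ^ 2 ≠ 0 := pow_ne_zero _ (norm_ne_zero_iff.mpr hc)
  have hVreal : nsqP V = ‖1 - c‖ ^ 2 - (1 - e) * (1 - f) := by
    have h1 : ((nsqP V : ℝ) : ℂ) = ((‖1 - c‖ ^ 2 - (1 - e) * (1 - f) : ℝ) : ℂ) := by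
      rw [← hermP_self, hVV]
      have : (1 - c) * (1 - (starRingEnd ℂ) c) = ((‖1 - c‖ ^ 2 : ℝ) : ℂ) := by
        rw [← Complex.normSq_eq_norm_sq, ← Complex.mul_conj]
        simp [map_sub]
      rw [this]
      push_cast
      ring
    exact_mod_cast h1
  have hmv : moebiusP η ξ = (1 - c)⁻¹ • V := by
    rw [moebiusP, hPη, hVdef, hAdef, hBdef, ← hedef, ← hsdef]
  rw [hmv, nsqP_smul, hVreal]
  rw [norm_inv]
  field_simp
  try ring
  try rfl

lemma cayley_herm {m} (z w : Cn m) (ha : Complex.I + w.2 ≠ 0) (hb : Complex.I + z.2 ≠ 0) :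
    (1:ℂ) - hermP (invCayley w) (invCayley z)
      = 4 * (starRingEnd ℂ) (rhoK z w)
        / ((Complex.I + w.2) * (starRingEnd ℂ) (Complex.I + z.2)) := by
  have hb' : (starRingEnd ℂ) (Complex.I + z.2) ≠ 0 := (map_ne_zero _).mpr hb
  have hb2 : -Complex.I + (starRingEnd ℂ) z.2 ≠ 0 := by
    have h := hb'
    rw [map_add, Complex.conj_I] at h
    exact h
  rw [eq_div_iff (mul_ne_zero ha hb')]
  rw [invCayley, invCayley, hermP]
  simp only [herm1_smul_left, herm1_smul_right, rhoK, map_sub, map_mul, map_div₀,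
    map_add, Complex.conj_I, Complex.conj_conj, herm1_conj, map_ofNat, map_one]
  have h3 : Complex.I ^ 3 = -Complex.I := by rw [pow_succ, Complex.I_sq]; ring
  have h4 : Complex.I ^ 4 = 1 := by rw [pow_succ, h3]; simp [Complex.I_mul_I]
  have h5 : Complex.I ^ 5 = Complex.I := by rw [pow_succ, h4]; ring
  have h6 : Complex.I ^ 6 = -1 := by rw [pow_succ, h5, Complex.I_mul_I]
  field_simp
  ring_nf
  simp only [Complex.I_sq, h3, h4, h5, h6]
  ring

lemma cayley_nsq {m} (z : Cn m) (hb : Complex.I + z.2 ≠ 0) :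
    1 - nsqP (invCayley z) = 4 * rho z / ‖Complex.I + z.2‖ ^ 2 := by
  have habs : ‖Complex.I + z.2‖ ^ 2 ≠ 0 :=
    pow_ne_zero _ (norm_ne_zero_iff.mpr hb)
  have h1 : ‖Complex.I + z.2‖ ^ 2 = z.2.re ^ 2 + (1 + z.2.im) ^ 2 := by
    rw [Complex.sq_norm, Complex.normSq_apply]
    simp
    ring
  have h2 : ‖Complex.I - z.2‖ ^ 2 = z.2.re ^ 2 + (1 - z.2.im) ^ 2 := by
    rw [Complex.sq_norm, Complex.normSq_apply]
    simp
    ring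
  rw [invCayley, nsqP, rho]
  simp only [nsq1_smul, norm_div, norm_mul, map_div₀, map_mul, Complex.norm_I, Complex.norm_ofNat, div_pow, mul_pow]
  field_simp
  rw [h1, h2]
  try ring

lemma rhoK_re_pos {m} (z w : Cn m) (hz : nsq1 z.1 < z.2.im) (hw : nsq1 w.1 < w.2.im) :
    0 < (rhoK z w).re := by
  have hre : (rhoK z w).re = (z.2.im + w.2.im) / 2 - (herm1 z.1 w.1).re := by
    rw [rhoK]
    rw [show Complex.I / 2 * ((starRingEnd ℂ) w.2 - z.2)
        = Complex.I * ((starRingEnd ℂ) w.2 - z.2) / 2 by ring]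
    simp [Complex.sub_re, Complex.div_re, Complex.mul_re, Complex.mul_im,
      Complex.I_re, Complex.I_im, Complex.conj_re, Complex.conj_im, Complex.sub_im,
      Complex.normSq_apply]
    try ring
  have hherm : (herm1 z.1 w.1).re ≤ (nsq1 z.1 + nsq1 w.1) / 2 := by
    rw [herm1, Complex.re_sum, nsq1, nsq1]
    rw [show (∑ j, ‖z.1 j‖ ^ 2 + ∑ j, ‖w.1 j‖ ^ 2) / 2
        = ∑ j, (‖z.1 j‖ ^ 2 + ‖w.1 j‖ ^ 2) / 2 by
      rw [← Finset.sum_add_distrib, Finset.sum_div]]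
    refine Finset.sum_le_sum fun j _ => ?_
    have h1 := Complex.re_le_norm (z.1 j * (starRingEnd ℂ) (w.1 j))
    rw [norm_mul, Complex.norm_conj] at h1
    nlinarith [norm_nonneg (z.1 j), norm_nonneg (w.1 j),
      sq_nonneg (‖z.1 j‖ - ‖w.1 j‖)]
  linarith

theorem bergmanDist_formula (m : ℕ) (z w : Cn m) (hz : z ∈ Siegel m) (hw : w ∈ Siegel m) :
    bergmanDist z w = _root_.artanh (Real.sqrt (1 - rho z * rho w / ‖rhoK z w‖ ^ 2)) ∧
      0 ≤ rho z * rho w ∧ rho z * rho w ≤ ‖rhoK z w‖ ^ 2 := by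
  have hzS : nsq1 z.1 < z.2.im := hz
  have hwS : nsq1 w.1 < w.2.im := hw
  have hz' : 0 < rho z := sub_pos.mpr hzS
  have hw' : 0 < rho w := sub_pos.mpr hwS
  have hbz : Complex.I + z.2 ≠ 0 := by
    intro h
    have h2 : (Complex.I + z.2).im = 0 := by rw [h]; simp
    simp only [Complex.add_im, Complex.I_im] at h2
    nlinarith [nsq1_nonneg z.1]
  have haw : Complex.I + w.2 ≠ 0 := by
    intro h
    have h2 : (Complex.I + w.2).im = 0 := by rw [h]; simp
    simp only [Complex.add_im, Complex.I_im] at h2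
    nlinarith [nsq1_nonneg w.1]
  have hρ : rhoK z w ≠ 0 := by
    intro h
    have := rhoK_re_pos z w hzS hwS
    rw [h] at this
    simp at this
  set η := invCayley z with hηdef
  set ξ := invCayley w with hξdef
  have h1c : (1:ℂ) - hermP ξ η
      = 4 * (starRingEnd ℂ) (rhoK z w)
        / ((Complex.I + w.2) * (starRingEnd ℂ) (Complex.I + z.2)) := cayley_herm z w haw hbz
  have hbz' : (starRingEnd ℂ) (Complex.I + z.2) ≠ 0 := (map_ne_zero _).mpr hbz
  have hcne : (1:ℂ) - hermP ξ η ≠ 0 := by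
    rw [h1c]
    exact div_ne_zero (mul_ne_zero (by norm_num) ((map_ne_zero _).mpr hρ))
      (mul_ne_zero haw hbz')
  have habsz : (0:ℝ) < ‖Complex.I + z.2‖ ^ 2 := pow_pos (norm_pos_iff.mpr hbz) 2
  have habsw : (0:ℝ) < ‖Complex.I + w.2‖ ^ 2 := pow_pos (norm_pos_iff.mpr haw) 2
  have habsρ : (0:ℝ) < ‖rhoK z w‖ ^ 2 := pow_pos (norm_pos_iff.mpr hρ) 2
  have hηz : 1 - nsqP η = 4 * rho z / ‖Complex.I + z.2‖ ^ 2 := cayley_nsq z hbz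
  have hξw : 1 - nsqP ξ = 4 * rho w / ‖Complex.I + w.2‖ ^ 2 := cayley_nsq w haw
  have hηle : nsqP η ≤ 1 := by
    have hpos : 0 < 4 * rho z / ‖Complex.I + z.2‖ ^ 2 :=
      div_pos (by linarith) habsz
    linarith
  have habs2 : ‖(1:ℂ) - hermP ξ η‖ ^ 2
      = 16 * ‖rhoK z w‖ ^ 2
        / (‖Complex.I + w.2‖ ^ 2 * ‖Complex.I + z.2‖ ^ 2) := by
    rw [h1c]
    rw [norm_div, norm_mul, norm_mul, Complex.norm_conj, Complex.norm_conj]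
    rw [div_pow, mul_pow, mul_pow]
    norm_num
  have hratio : (1 - nsqP η) * (1 - nsqP ξ) / ‖(1:ℂ) - hermP ξ η‖ ^ 2
      = rho z * rho w / ‖rhoK z w‖ ^ 2 := by
    rw [hηz, hξw, habs2]
    field_simp
    ring
  have hm : nsqP (moebiusP η ξ) = 1 - rho z * rho w / ‖rhoK z w‖ ^ 2 := by
    rw [nsqP_moebius η ξ hηle hcne, hratio]
  refine ⟨?_, le_of_lt (mul_pos hz' hw'), ?_⟩
  · rw [bergmanDist, ← hηdef, ← hξdef, hm]
  · have h0 := nsqP_nonneg (moebiusP η ξ)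
    rw [hm] at h0
    have : rho z * rho w / ‖rhoK z w‖ ^ 2 ≤ 1 := by linarith
    exact (div_le_one habsρ).mp this
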